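/- With the logarithmic score and any finite λ > 0, the correctness incentive fails: there exist p > p' in (0,1) such that W(p) < W(p'), where W(p) = λp - p·(-log p) - (1-p)·(-log(1-p)). Concretely, W is not monotone on (0,1) since W'(p) = λ + log p - log(1-p) < 0 for p sufficiently small. -/

import Mathlib

/-- With the logarithmic score and any finite λ > 0, the correctness incentive
fails: W(p) = λp + p log p + (1-p) log(1-p) is not monotone; there exist
p' < p in (0,1) with W(p) < W(p'), and W'(p) = λ + log p - log(1-p) < 0 for p
sufficiently small. -/
theorem log_score_correctness_fails (lam : ℝ) (hlam : 0 < lam) :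
    (∃ p ∈ Set.Ioo (0:ℝ) 1, ∃ p' ∈ Set.Ioo (0:ℝ) 1, p' < p ∧
      lam * p + p * Real.log p + (1 - p) * Real.log (1 - p)
        < lam * p' + p' * Real.log p' + (1 - p') * Real.log (1 - p')) ∧
    (∃ ε > (0:ℝ), ∀ p ∈ Set.Ioo (0:ℝ) ε,
      lam + Real.log p - Real.log (1 - p) < 0) := by
  set ε : ℝ := min (Real.exp (-lam) / 2) (1/2) with hεdef
  have hε0 : 0 < ε := lt_min (by positivity) (by norm_num)
  have hεhalf : ε ≤ 1/2 := min_le_right _ _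
  have key : ∀ p ∈ Set.Ioo (0:ℝ) ε, lam + Real.log p - Real.log (1 - p) < 0 := by
    rintro p ⟨hp0, hpε⟩
    have hp2 : p < 1/2 := lt_of_lt_of_le hpε hεhalf
    have h1 : Real.log p < -lam - Real.log 2 := by
      have hlt : p < Real.exp (-lam) / 2 := lt_of_lt_of_le hpε (min_le_left _ _)
      calc Real.log p < Real.log (Real.exp (-lam) / 2) := Real.log_lt_log hp0 hlt
        _ = -lam - Real.log 2 := by
            rw [Real.log_div (by positivity) (by norm_num), Real.log_exp]
    have h2 : -Real.log 2 < Real.log (1 - p) := by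
      have hlt : (1:ℝ)/2 < 1 - p := by linarith
      calc -Real.log 2 = Real.log (1/2) := by
            rw [Real.log_div one_ne_zero (by norm_num), Real.log_one]; ring
        _ < Real.log (1 - p) := Real.log_lt_log (by norm_num) hlt
    linarith
  refine ⟨?_, ⟨ε, hε0, key⟩⟩
  set f : ℝ → ℝ := fun p => lam * p + p * Real.log p + (1 - p) * Real.log (1 - p)
    with hf
  have hderiv : ∀ p ∈ Set.Ioo (0:ℝ) 1,
      HasDerivAt f (lam + Real.log p - Real.log (1 - p)) p := by
    rintro p ⟨hp0, hp1⟩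
    have h1 : HasDerivAt (fun x : ℝ => lam * x) lam p := by
      simpa using (hasDerivAt_id p).const_mul lam
    have h2 : HasDerivAt (fun x : ℝ => x * Real.log x) (Real.log p + 1) p :=
      Real.hasDerivAt_mul_log (ne_of_gt hp0)
    have hu : HasDerivAt (fun x : ℝ => 1 - x) (-1) p := by
      simpa using (hasDerivAt_id p).const_sub 1
    have h3 : HasDerivAt (fun x : ℝ => (1 - x) * Real.log (1 - x))
        ((Real.log (1 - p) + 1) * (-1)) p :=
      (Real.hasDerivAt_mul_log (by linarith : (1:ℝ) - p ≠ 0)).comp p hu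
    have := (h1.add h2).add h3
    exact this.congr_deriv (by ring)
  have hsub : Set.Icc (ε/3) (2*ε/3) ⊆ Set.Ioo (0:ℝ) 1 := by
    rintro x ⟨hx1, hx2⟩
    constructor
    · linarith
    · have : 2*ε/3 < 1 := by linarith
      linarith
  have hanti : StrictAntiOn f (Set.Icc (ε/3) (2*ε/3)) := by
    apply strictAntiOn_of_deriv_neg (convex_Icc _ _)
    · intro x hx
      exact ((hderiv x (hsub hx)).differentiableAt).continuousAt.continuousWithinAt
    · intro x hx
      rw [interior_Icc] at hx
      have hx01 : x ∈ Set.Ioo (0:ℝ) 1 := hsub ⟨le_of_lt hx.1, le_of_lt hx.2⟩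
      rw [(hderiv x hx01).deriv]
      apply key
      exact ⟨hx01.1, by linarith [hx.2, hεhalf]⟩
    all_goals skip
  have hab : (ε/3 : ℝ) < 2*ε/3 := by linarith
  have hlt := hanti ⟨le_refl _, le_of_lt hab⟩ ⟨le_of_lt hab, le_refl _⟩ hab
  refine ⟨2*ε/3, hsub ⟨le_of_lt hab, le_refl _⟩, ε/3, hsub ⟨le_refl _, le_of_lt hab⟩,
    hab, hlt⟩
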